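/- Let V(ℓ,a) be the evaluation module of the quantum loop algebra L = U_q(L(sl₂)) with standard basis v₀,…,v_ℓ, and let τ be the anti-automorphism of L with τ(e_i^+) = e_i^- k_i, τ(e_i^- k_i) = e_i^+, τ(k_i^{±1}) = k_i^{±1}. Then the dual module Hom(V(ℓ,a), ℂ), with L-action (Xf)(v) = f(τ(X)v), is isomorphic to V(ℓ, a⁻¹) as an L-module. Explicitly, if f₀,…,f_ℓ is the dual basis and g_i = q^{−i(ℓ−i+1)}·binom_q(ℓ,i)·f_i (q-binomial coefficient), then g₀,…,g_ℓ is a standard basis of an evaluation module with parameter a⁻¹. -/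

import Mathlib

open scoped TensorProduct

noncomputable section

/-- `q` is not a root of unity. -/
def NotRootOfUnity (q : ℂ) : Prop := ∀ n : ℕ, n ≠ 0 → q ^ n ≠ 1

/-- The `q`-integer `[n] = (qⁿ − q⁻ⁿ)/(q − q⁻¹)`. -/
def qnum (q : ℂ) (n : ℕ) : ℂ := (q ^ n - (q⁻¹) ^ n) / (q - q⁻¹)

/-- Data of an action of the generators of `U_q(L(sl₂))` on a ℂ-vector space. -/
structure LModule where
  V : Type
  [acg : AddCommGroup V]
  [mod : Module ℂ V]
  e0p : Module.End ℂ V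
  e0m : Module.End ℂ V
  e1p : Module.End ℂ V
  e1m : Module.End ℂ V
  k0 : Module.End ℂ V
  k1 : Module.End ℂ V

attribute [instance] LModule.acg LModule.mod

/-- The operator data is an honest representation of `U_q(L(sl₂))`:
the defining relations hold. -/
structure LModule.IsRep (q : ℂ) (M : LModule) : Prop where
  k01 : M.k0 * M.k1 = 1
  k10 : M.k1 * M.k0 = 1
  k0e0p : M.k0 * M.e0p = q ^ 2 • (M.e0p * M.k0)
  k0e0m : M.k0 * M.e0m = (q⁻¹) ^ 2 • (M.e0m * M.k0)
  k0e1p : M.k0 * M.e1p = (q⁻¹) ^ 2 • (M.e1p * M.k0)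
  k0e1m : M.k0 * M.e1m = q ^ 2 • (M.e1m * M.k0)
  k1e1p : M.k1 * M.e1p = q ^ 2 • (M.e1p * M.k1)
  k1e1m : M.k1 * M.e1m = (q⁻¹) ^ 2 • (M.e1m * M.k1)
  k1e0p : M.k1 * M.e0p = (q⁻¹) ^ 2 • (M.e0p * M.k1)
  k1e0m : M.k1 * M.e0m = q ^ 2 • (M.e0m * M.k1)
  comm0 : M.e0p * M.e0m - M.e0m * M.e0p = (q - q⁻¹)⁻¹ • (M.k0 - M.k1)
  comm1 : M.e1p * M.e1m - M.e1m * M.e1p = (q - q⁻¹)⁻¹ • (M.k1 - M.k0)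
  mixed01 : M.e0p * M.e1m = M.e1m * M.e0p
  mixed10 : M.e1p * M.e0m = M.e0m * M.e1p
  serre_p01 : M.e0p * (M.e0p ^ 2 * M.e1p - (q ^ 2 + (q⁻¹) ^ 2) • (M.e0p * M.e1p * M.e0p) +
      M.e1p * M.e0p ^ 2) = (M.e0p ^ 2 * M.e1p - (q ^ 2 + (q⁻¹) ^ 2) •
      (M.e0p * M.e1p * M.e0p) + M.e1p * M.e0p ^ 2) * M.e0p
  serre_p10 : M.e1p * (M.e1p ^ 2 * M.e0p - (q ^ 2 + (q⁻¹) ^ 2) • (M.e1p * M.e0p * M.e1p) +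
      M.e0p * M.e1p ^ 2) = (M.e1p ^ 2 * M.e0p - (q ^ 2 + (q⁻¹) ^ 2) •
      (M.e1p * M.e0p * M.e1p) + M.e0p * M.e1p ^ 2) * M.e1p
  serre_m01 : M.e0m * (M.e0m ^ 2 * M.e1m - (q ^ 2 + (q⁻¹) ^ 2) • (M.e0m * M.e1m * M.e0m) +
      M.e1m * M.e0m ^ 2) = (M.e0m ^ 2 * M.e1m - (q ^ 2 + (q⁻¹) ^ 2) •
      (M.e0m * M.e1m * M.e0m) + M.e1m * M.e0m ^ 2) * M.e0m
  serre_m10 : M.e1m * (M.e1m ^ 2 * M.e0m - (q ^ 2 + (q⁻¹) ^ 2) • (M.e1m * M.e0m * M.e1m) +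
      M.e0m * M.e1m ^ 2) = (M.e1m ^ 2 * M.e0m - (q ^ 2 + (q⁻¹) ^ 2) •
      (M.e1m * M.e0m * M.e1m) + M.e0m * M.e1m ^ 2) * M.e1m

/-- The evaluation module `V(ℓ,a)` (with the convention that `a = 0` gives the
`L'`-module `V(ℓ)` on which `e₀⁻` acts as `0`, since `0⁻¹ = 0` in Lean). -/
def evalModule (q : ℂ) (ℓ : ℕ) (a : ℂ) : LModule where
  V := Fin (ℓ + 1) → ℂ
  e0p := Matrix.toLin'
    (Matrix.of fun i j : Fin (ℓ + 1) => if (i : ℕ) = (j : ℕ) + 1 then a * q * qnum q i else 0)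
  e0m := Matrix.toLin'
    (Matrix.of fun i j : Fin (ℓ + 1) =>
      if (j : ℕ) = (i : ℕ) + 1 then a⁻¹ * q⁻¹ * qnum q (ℓ - (i : ℕ)) else 0)
  e1p := Matrix.toLin'
    (Matrix.of fun i j : Fin (ℓ + 1) =>
      if (j : ℕ) = (i : ℕ) + 1 then qnum q (ℓ - (i : ℕ)) else 0)
  e1m := Matrix.toLin'
    (Matrix.of fun i j : Fin (ℓ + 1) => if (i : ℕ) = (j : ℕ) + 1 then qnum q i else 0)
  k0 := Matrix.toLin'
    (Matrix.diagonal fun i : Fin (ℓ + 1) => q ^ (2 * ((i : ℕ) : ℤ) - (ℓ : ℤ)))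
  k1 := Matrix.toLin'
    (Matrix.diagonal fun i : Fin (ℓ + 1) => q ^ ((ℓ : ℤ) - 2 * ((i : ℕ) : ℤ)))

/-- The tensor product of two modules, with the generator actions given by the
coproduct `Δ(k_i^{±1}) = k_i^{±1} ⊗ k_i^{±1}`, `Δ(e_i⁺) = k_i ⊗ e_i⁺ + e_i⁺ ⊗ 1`,
`Δ(e_i⁻k_i) = k_i ⊗ e_i⁻k_i + e_i⁻k_i ⊗ 1`. -/
def LModule.tensor (M N : LModule) : LModule where
  V := M.V ⊗[ℂ] N.V
  e0p := TensorProduct.map M.k0 N.e0p + TensorProduct.map M.e0p (1 : Module.End ℂ N.V)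
  e0m := TensorProduct.map (1 : Module.End ℂ M.V) N.e0m + TensorProduct.map (M.e0m * M.k0) N.k1
  e1p := TensorProduct.map M.k1 N.e1p + TensorProduct.map M.e1p (1 : Module.End ℂ N.V)
  e1m := TensorProduct.map (1 : Module.End ℂ M.V) N.e1m + TensorProduct.map (M.e1m * M.k1) N.k0
  k0 := TensorProduct.map M.k0 N.k0
  k1 := TensorProduct.map M.k1 N.k1

/-- The tensor product `V(ℓ₁,a₁) ⊗ ⋯ ⊗ V(ℓ_n,a_n)` of evaluation modules. -/
def tensorList (q : ℂ) : ℕ × ℂ → List (ℕ × ℂ) → LModule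
  | p, [] => evalModule q p.1 p.2
  | p, p' :: l => (evalModule q p.1 p.2).tensor (tensorList q p' l)

/-- The action of the generator `x` of the augmented TD-algebra via `φ_s`:
`x ↦ α(s e₀⁺ + ε s⁻¹ e₁⁻k₁)`, `α = −q⁻¹(q−q⁻¹)²`. -/
def LModule.tx (M : LModule) (q s ε : ℂ) : Module.End ℂ M.V :=
  (-q⁻¹ * (q - q⁻¹) ^ 2) • (s • M.e0p + (ε * s⁻¹) • (M.e1m * M.k1))

/-- The action of the generator `y` via `φ_s`: `y ↦ ε* s e₀⁻k₀ + s⁻¹ e₁⁺`. -/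
def LModule.ty (M : LModule) (s ε' : ℂ) : Module.End ℂ M.V :=
  (ε' * s) • (M.e0m * M.k0) + s⁻¹ • M.e1p

/-- The action of the generator `k` via `φ_s`: `k ↦ s k₀`. -/
def LModule.tk (M : LModule) (s : ℂ) : Module.End ℂ M.V := s • M.k0

/-- The weight space `U_i`: the eigenspace of `k` with eigenvalue `s q^{2i−d}`. -/
def LModule.wt (M : LModule) (q s : ℂ) (d i : ℕ) : Submodule ℂ M.V :=
  LinearMap.ker (M.tk s - (s * q ^ (2 * (i : ℤ) - (d : ℤ))) • 1)

/-- Property `(D)₀`: `k` acts diagonalizably with `V = ⊕_{i=0}^d U_i`. -/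
def D0 (q s : ℂ) (M : LModule) (d : ℕ) : Prop :=
  (⨆ i : Fin (d + 1), M.wt q s d (i : ℕ)) = ⊤

/-- Property `(D)₁`: the highest weight space is 1-dimensional. -/
def D1 (q s : ℂ) (M : LModule) (d : ℕ) : Prop :=
  Module.finrank ℂ ↥(M.wt q s d 0) = 1

/-- The sequence `σ` of eigenvalues of `y^i x^i` on the highest weight space. -/
def HasSigma (q s ε ε' : ℂ) (M : LModule) (d : ℕ) (σ : ℕ → ℂ) : Prop :=
  σ 0 = 1 ∧ ∀ i : ℕ, ∀ v ∈ M.wt q s d 0, (M.ty s ε' ^ i * M.tx q s ε ^ i) v = σ i • v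

/-- The Drinfel'd polynomial, as a function of `λ`:
`P_V(λ) = Q⁻¹ Σ_{i=0}^d σ_i Π_{j=i+1}^d (q^j−q^{−j})²(ε s⁻²q^{2(d−j)} + ε* s²q^{−2(d−j)} − λ)`,
`Q = (−1)^d Π_{j=1}^d (q^j−q^{−j})²`. -/
def Pfun (q s ε ε' : ℂ) (d : ℕ) (σ : ℕ → ℂ) : ℂ → ℂ := fun lam =>
  ((-1 : ℂ) ^ d * ∏ j ∈ Finset.range d, (q ^ (j + 1) - (q⁻¹) ^ (j + 1)) ^ 2)⁻¹ *
    ∑ i ∈ Finset.range (d + 1), σ i *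
      ∏ j ∈ Finset.Icc (i + 1) d,
        ((q ^ j - (q⁻¹) ^ j) ^ 2 *
          (ε * (s⁻¹) ^ 2 * q ^ (2 * (d - j)) + ε' * s ^ 2 * (q⁻¹) ^ (2 * (d - j)) - lam))

end

/-- The `q`-factorial `[n]! = [1][2]⋯[n]`. -/
noncomputable def qfact (q : ℂ) (n : ℕ) : ℂ := ∏ j ∈ Finset.range n, qnum q (j + 1)

/-- The `q`-binomial coefficient `[ℓ]!/([ℓ−i]![i]!)`. -/
noncomputable def qbinom (q : ℂ) (ℓ i : ℕ) : ℂ := qfact q ℓ / (qfact q (ℓ - i) * qfact q i)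

/-- The rescaled dual basis `g_i = q^{−i(ℓ−i+1)} binom_q(ℓ,i) f_i`, where `f_i` is the
basis of `Hom(V(ℓ,a),ℂ)` dual to the standard basis (and `g_i = 0` for `i > ℓ`). -/
noncomputable def dualG (q : ℂ) (ℓ : ℕ) (i : ℕ) : Module.Dual ℂ (Fin (ℓ + 1) → ℂ) :=
  if h : i < ℓ + 1 then
    (q ^ (-((i * (ℓ - i + 1) : ℕ) : ℤ)) * qbinom q ℓ i) •
      (LinearMap.proj (⟨i, h⟩ : Fin (ℓ + 1)) : (Fin (ℓ + 1) → ℂ) →ₗ[ℂ] ℂ)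
  else 0

/-! ### Auxiliary lemmas -/

namespace DualEvalAux

variable {q : ℂ}

lemma sub_inv_ne (hq : q ≠ 0) (hqru : NotRootOfUnity q) : q - q⁻¹ ≠ 0 := by
  intro h
  apply hqru 2 (by norm_num)
  have : q = q⁻¹ := sub_eq_zero.mp h
  field_simp at this
  exact this

lemma qnum_ne_zero (hq : q ≠ 0) (hqru : NotRootOfUnity q) (n : ℕ) (hn : n ≠ 0) :
    qnum q n ≠ 0 := by
  have h1 := sub_inv_ne hq hqru
  have h2 : q ^ n - (q⁻¹) ^ n ≠ 0 := by
    intro h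
    apply hqru (2 * n) (by omega)
    have : q ^ n = (q⁻¹) ^ n := sub_eq_zero.mp h
    rw [inv_pow] at this
    field_simp at this
    rw [two_mul, pow_add, ← sq, this]
  exact div_ne_zero h2 h1

lemma qnum_zero : qnum q 0 = 0 := by simp [qnum]

lemma qfact_ne_zero (hq : q ≠ 0) (hqru : NotRootOfUnity q) (n : ℕ) : qfact q n ≠ 0 :=
  Finset.prod_ne_zero_iff.mpr fun j _ => qnum_ne_zero hq hqru (j + 1) (by omega)

lemma qbinom_ne_zero (hq : q ≠ 0) (hqru : NotRootOfUnity q) (l i : ℕ) : qbinom q l i ≠ 0 :=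
  div_ne_zero (qfact_ne_zero hq hqru _)
    (mul_ne_zero (qfact_ne_zero hq hqru _) (qfact_ne_zero hq hqru _))

lemma qfact_succ (n : ℕ) : qfact q (n + 1) = qfact q n * qnum q (n + 1) :=
  Finset.prod_range_succ _ _

/-- coefficient of the rescaled dual basis -/
noncomputable def cc (q : ℂ) (ℓ i : ℕ) : ℂ :=
  q ^ (-((i * (ℓ - i + 1) : ℕ) : ℤ)) * qbinom q ℓ i

lemma cc_ne_zero (hq : q ≠ 0) (hqru : NotRootOfUnity q) (ℓ i : ℕ) : cc q ℓ i ≠ 0 :=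
  mul_ne_zero (zpow_ne_zero _ hq) (qbinom_ne_zero hq hqru ℓ i)

lemma rec1 (hq : q ≠ 0) (hqru : NotRootOfUnity q) {ℓ i : ℕ} (hi : i < ℓ) :
    cc q ℓ (i + 1) * qnum q (i + 1) * q ^ ((ℓ : ℤ) - 2 * i) = cc q ℓ i * qnum q (ℓ - i) := by
  obtain ⟨m, rfl⟩ : ∃ m, ℓ = i + m := ⟨ℓ - i, by omega⟩
  have hm : 1 ≤ m := by omega
  unfold cc qbinom
  rw [show i + m - (i + 1) = m - 1 from by omega, show i + m - i = m from by omega,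
    show qfact q m = qfact q (m - 1) * qnum q m from by
      conv_lhs => rw [show m = (m - 1) + 1 from by omega, qfact_succ (m - 1),
        show m - 1 + 1 = m from by omega],
    qfact_succ i,
    show (i + 1) * (m - 1 + 1) = (i + 1) * m from by rw [show m - 1 + 1 = m from by omega]]
  have hw : q ^ (((i : ℤ) + (m : ℤ)) - 2 * i) * q ^ ((i : ℤ) * ((m : ℤ) + 1))
      = q ^ (((i : ℤ) + 1) * (m : ℤ)) := by
    rw [← zpow_add₀ hq]; congr 1; ring
  have hfm := qfact_ne_zero hq hqru (m - 1)
  have hfi := qfact_ne_zero hq hqru i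
  have hnum := qnum_ne_zero hq hqru (i + 1) (by omega)
  have hnm := qnum_ne_zero hq hqru m (by omega)
  have hz1 : q ^ (((i : ℤ) + 1) * (m : ℤ)) ≠ 0 := zpow_ne_zero _ hq
  have hz2 : q ^ ((i : ℤ) * ((m : ℤ) + 1)) ≠ 0 := zpow_ne_zero _ hq
  push_cast [zpow_neg]
  field_simp
  linear_combination qfact q (i + m) * hw

lemma dualG_apply (q : ℂ) (ℓ i : ℕ) (v : Fin (ℓ + 1) → ℂ) :
    dualG q ℓ i v = if h : i < ℓ + 1 then cc q ℓ i * v ⟨i, h⟩ else 0 := by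
  unfold dualG cc
  split <;> simp

lemma dualG_of_ge (q : ℂ) {ℓ i : ℕ} (h : ℓ + 1 ≤ i) : dualG q ℓ i = 0 := by
  unfold dualG; rw [dif_neg (by omega)]

lemma sum_fin_ite {n m : ℕ} (hm : m < n) (f : Fin n → ℂ) :
    (∑ j : Fin n, if (j : ℕ) = m then f j else 0) = f ⟨m, hm⟩ := by
  have h : ∀ j : Fin n, ((j : ℕ) = m) = (j = ⟨m, hm⟩) := fun j => by simp [Fin.ext_iff]
  simp only [h]
  simp

lemma sum_fin_ite' {n m : ℕ} (hm : m < n) (f : Fin n → ℂ) :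
    (∑ j : Fin n, if m = (j : ℕ) then f j else 0) = f ⟨m, hm⟩ := by
  have h : ∀ j : Fin n, (m = (j : ℕ)) = (j = ⟨m, hm⟩) := fun j => by
    simp [Fin.ext_iff, eq_comm]
  simp only [h]
  simp

lemma sum_fin_ite_ge {n m : ℕ} (hm : n ≤ m) (f : Fin n → ℂ) :
    (∑ j : Fin n, if (j : ℕ) = m then f j else 0) = 0 := by
  apply Finset.sum_eq_zero; intro j _; rw [if_neg (by omega)]

section Actions

variable (hq : q ≠ 0) (hqru : NotRootOfUnity q) (ℓ : ℕ) (a : ℂ)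

include hq hqru

lemma act_A0p (i : ℕ) :
    LinearMap.dualMap ((evalModule q ℓ a).e0m * (evalModule q ℓ a).k0) (dualG q ℓ i)
      = (a⁻¹ * q * qnum q (i + 1)) • dualG q ℓ (i + 1) := by
  change LinearMap.dualMap (Matrix.toLin' (Matrix.of fun i j : Fin (ℓ + 1) =>
        if (j : ℕ) = (i : ℕ) + 1 then a⁻¹ * q⁻¹ * qnum q (ℓ - (i : ℕ)) else 0) *
      Matrix.toLin' (Matrix.diagonal fun i : Fin (ℓ + 1) => q ^ (2 * ((i : ℕ) : ℤ) - (ℓ : ℤ)))) (dualG q ℓ i) =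
      (a⁻¹ * q * qnum q (i + 1)) • dualG q ℓ (i + 1)
  rcases lt_trichotomy i ℓ with hi | heq | hi
  · refine LinearMap.ext fun v => ?_
    simp only [LinearMap.dualMap_apply, Module.End.mul_apply, LinearMap.smul_apply,
      smul_eq_mul, dualG_apply, evalModule,
      Matrix.toLin'_apply, Matrix.mulVec, dotProduct, Matrix.of_apply,
      Matrix.diagonal_apply, ite_mul, zero_mul, mul_ite, mul_zero,
      Finset.sum_ite_eq, Finset.mem_univ, if_true,
      dif_pos (by omega : i < ℓ + 1), dif_pos (by omega : i + 1 < ℓ + 1),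
      sum_fin_ite (by omega : i + 1 < ℓ + 1)]
    push_cast
    have h := rec1 hq hqru hi
    have hw : q ^ (2 * ((i : ℤ) + 1) - (ℓ : ℤ)) * q ^ ((ℓ : ℤ) - 2 * i) = q * q := by
      rw [← zpow_add₀ hq, show (2 * ((i : ℤ) + 1) - (ℓ : ℤ)) + ((ℓ : ℤ) - 2 * i) = 2 from by ring]
      exact zpow_two q
    have hq1 : q * q⁻¹ = 1 := mul_inv_cancel₀ hq
    set V := v ⟨i + 1, by omega⟩
    linear_combination (-(a⁻¹ * q⁻¹ * q ^ (2 * ((i : ℤ) + 1) - (ℓ : ℤ)) * V)) * h +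
      (a⁻¹ * q⁻¹ * cc q ℓ (i + 1) * qnum q (i + 1) * V) * hw +
      (a⁻¹ * q * cc q ℓ (i + 1) * qnum q (i + 1) * V) * hq1
  · refine LinearMap.ext fun v => ?_
    rw [dualG_of_ge q (by omega : ℓ + 1 ≤ i + 1)]
    simp only [LinearMap.dualMap_apply, Module.End.mul_apply, LinearMap.smul_apply,
      smul_eq_mul, dualG_apply, evalModule,
      Matrix.toLin'_apply, Matrix.mulVec, dotProduct, Matrix.of_apply,
      Matrix.diagonal_apply, ite_mul, zero_mul, mul_ite, mul_zero,
      Finset.sum_ite_eq, Finset.mem_univ, if_true,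
      dif_pos (by omega : i < ℓ + 1),
      sum_fin_ite_ge (by omega : ℓ + 1 ≤ i + 1)]
    simp
  · rw [dualG_of_ge q (by omega), dualG_of_ge q (by omega)]
    simp

set_option maxHeartbeats 1000000 in
set_option linter.unusedSectionVars false in
set_option linter.unusedTactic false in
lemma act_AK0 (i : ℕ) :
    LinearMap.dualMap ((evalModule q ℓ a).k0) (dualG q ℓ i)
      = (q ^ (2 * (i : ℤ) - (ℓ : ℤ))) • dualG q ℓ i := by
  change LinearMap.dualMap (Matrix.toLin' (Matrix.diagonal fun i : Fin (ℓ + 1) => q ^ (2 * ((i : ℕ) : ℤ) - (ℓ : ℤ)))) (dualG q ℓ i) =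
      (q ^ (2 * (i : ℤ) - (ℓ : ℤ))) • dualG q ℓ i
  by_cases hi : i < ℓ + 1
  · refine LinearMap.ext fun v => ?_
    simp only [LinearMap.dualMap_apply, LinearMap.smul_apply, smul_eq_mul, dualG_apply,
      evalModule, Matrix.toLin'_apply, Matrix.mulVec, dotProduct,
      Matrix.diagonal_apply, ite_mul, zero_mul, mul_ite, mul_zero,
      Finset.sum_ite_eq, Finset.mem_univ, if_true, dif_pos hi]
    push_cast
    ring
  · rw [dualG_of_ge q (by omega)]
    simp

set_option maxHeartbeats 1000000 in
set_option linter.unusedSectionVars false in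
set_option linter.unusedTactic false in
lemma act_AK1 (i : ℕ) :
    LinearMap.dualMap ((evalModule q ℓ a).k1) (dualG q ℓ i)
      = (q ^ ((ℓ : ℤ) - 2 * (i : ℤ))) • dualG q ℓ i := by
  change LinearMap.dualMap (Matrix.toLin' (Matrix.diagonal fun i : Fin (ℓ + 1) => q ^ ((ℓ : ℤ) - 2 * ((i : ℕ) : ℤ)))) (dualG q ℓ i) =
      (q ^ ((ℓ : ℤ) - 2 * (i : ℤ))) • dualG q ℓ i
  by_cases hi : i < ℓ + 1
  · refine LinearMap.ext fun v => ?_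
    simp only [LinearMap.dualMap_apply, LinearMap.smul_apply, smul_eq_mul, dualG_apply,
      evalModule, Matrix.toLin'_apply, Matrix.mulVec, dotProduct,
      Matrix.diagonal_apply, ite_mul, zero_mul, mul_ite, mul_zero,
      Finset.sum_ite_eq, Finset.mem_univ, if_true, dif_pos hi]
    push_cast
    ring
  · rw [dualG_of_ge q (by omega)]
    simp

set_option maxHeartbeats 1000000 in
set_option linter.unusedSectionVars false in
set_option linter.unusedTactic false in
lemma act_A1m (i : ℕ) :
    LinearMap.dualMap ((evalModule q ℓ a).k0 * (evalModule q ℓ a).e1p) (dualG q ℓ i)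
      = qnum q (i + 1) • dualG q ℓ (i + 1) := by
  change LinearMap.dualMap (Matrix.toLin' (Matrix.diagonal fun i : Fin (ℓ + 1) => q ^ (2 * ((i : ℕ) : ℤ) - (ℓ : ℤ))) *
      Matrix.toLin' (Matrix.of fun i j : Fin (ℓ + 1) =>
        if (j : ℕ) = (i : ℕ) + 1 then qnum q (ℓ - (i : ℕ)) else 0)) (dualG q ℓ i) =
      qnum q (i + 1) • dualG q ℓ (i + 1)
  rcases lt_trichotomy i ℓ with hi | heq | hi
  · refine LinearMap.ext fun v => ?_
    simp only [LinearMap.dualMap_apply, Module.End.mul_apply, LinearMap.smul_apply,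
      smul_eq_mul, dualG_apply, evalModule,
      Matrix.toLin'_apply, Matrix.mulVec, dotProduct, Matrix.of_apply,
      Matrix.diagonal_apply, ite_mul, zero_mul, mul_ite, mul_zero,
      Finset.sum_ite_eq, Finset.mem_univ, if_true,
      dif_pos (by omega : i < ℓ + 1), dif_pos (by omega : i + 1 < ℓ + 1),
      sum_fin_ite (by omega : i + 1 < ℓ + 1)]
    push_cast
    have h := rec1 hq hqru hi
    have hw : q ^ (2 * (i : ℤ) - (ℓ : ℤ)) * q ^ ((ℓ : ℤ) - 2 * i) = 1 := by
      rw [← zpow_add₀ hq, show (2 * (i : ℤ) - (ℓ : ℤ)) + ((ℓ : ℤ) - 2 * i) = 0 from by ring,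
        zpow_zero]
    set V := v ⟨i + 1, by omega⟩
    linear_combination (-(q ^ (2 * (i : ℤ) - (ℓ : ℤ)) * V)) * h +
      (cc q ℓ (i + 1) * qnum q (i + 1) * V) * hw
  · refine LinearMap.ext fun v => ?_
    rw [dualG_of_ge q (by omega : ℓ + 1 ≤ i + 1)]
    simp only [LinearMap.dualMap_apply, Module.End.mul_apply, LinearMap.smul_apply,
      smul_eq_mul, dualG_apply, evalModule,
      Matrix.toLin'_apply, Matrix.mulVec, dotProduct, Matrix.of_apply,
      Matrix.diagonal_apply, ite_mul, zero_mul, mul_ite, mul_zero,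
      Finset.sum_ite_eq, Finset.mem_univ, if_true,
      dif_pos (by omega : i < ℓ + 1),
      sum_fin_ite_ge (by omega : ℓ + 1 ≤ i + 1)]
    simp
  · rw [dualG_of_ge q (by omega), dualG_of_ge q (by omega)]
    simp

set_option maxHeartbeats 1000000 in
set_option linter.unusedSectionVars false in
set_option linter.unusedTactic false in
lemma act_A1p (i : ℕ) :
    LinearMap.dualMap ((evalModule q ℓ a).e1m * (evalModule q ℓ a).k1) (dualG q ℓ (i + 1))
      = qnum q (ℓ - i) • dualG q ℓ i := by
  change LinearMap.dualMap (Matrix.toLin' (Matrix.of fun i j : Fin (ℓ + 1) => if (i : ℕ) = (j : ℕ) + 1 then qnum q i else 0) *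
      Matrix.toLin' (Matrix.diagonal fun i : Fin (ℓ + 1) => q ^ ((ℓ : ℤ) - 2 * ((i : ℕ) : ℤ)))) (dualG q ℓ (i + 1)) =
      qnum q (ℓ - i) • dualG q ℓ i
  rcases lt_or_ge i ℓ with hi | hi
  · refine LinearMap.ext fun v => ?_
    simp only [LinearMap.dualMap_apply, Module.End.mul_apply, LinearMap.smul_apply,
      smul_eq_mul, dualG_apply, evalModule,
      Matrix.toLin'_apply, Matrix.mulVec, dotProduct, Matrix.of_apply,
      Matrix.diagonal_apply, ite_mul, zero_mul, mul_ite, mul_zero,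
      Finset.sum_ite_eq, Finset.mem_univ, if_true,
      dif_pos (by omega : i < ℓ + 1), dif_pos (by omega : i + 1 < ℓ + 1),
      Nat.add_right_cancel_iff, sum_fin_ite' (by omega : i < ℓ + 1)]
    push_cast
    have h := rec1 hq hqru hi
    set V := v ⟨i, by omega⟩
    linear_combination V * h
  · rw [dualG_of_ge q (by omega), show ℓ - i = 0 from by omega, qnum_zero]
    simp

set_option maxHeartbeats 1000000 in
set_option linter.unusedSectionVars false in
set_option linter.unusedTactic false in
lemma act_A1p_zero :
    LinearMap.dualMap ((evalModule q ℓ a).e1m * (evalModule q ℓ a).k1) (dualG q ℓ 0) = 0 := by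
  change LinearMap.dualMap (Matrix.toLin' (Matrix.of fun i j : Fin (ℓ + 1) => if (i : ℕ) = (j : ℕ) + 1 then qnum q i else 0) *
      Matrix.toLin' (Matrix.diagonal fun i : Fin (ℓ + 1) => q ^ ((ℓ : ℤ) - 2 * ((i : ℕ) : ℤ)))) (dualG q ℓ 0) =
      0
  refine LinearMap.ext fun v => ?_
  simp only [LinearMap.dualMap_apply, Module.End.mul_apply, dualG_apply, evalModule,
    Matrix.toLin'_apply, Matrix.mulVec, dotProduct, Matrix.of_apply,
    Matrix.diagonal_apply, ite_mul, zero_mul, mul_ite, mul_zero,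
    Finset.sum_ite_eq, Finset.mem_univ, if_true, dif_pos (by omega : 0 < ℓ + 1)]
  simp

set_option maxHeartbeats 1000000 in
set_option linter.unusedSectionVars false in
set_option linter.unusedTactic false in
lemma act_A0m (i : ℕ) :
    LinearMap.dualMap ((evalModule q ℓ a).k1 * (evalModule q ℓ a).e0p) (dualG q ℓ (i + 1))
      = (a * q⁻¹ * qnum q (ℓ - i)) • dualG q ℓ i := by
  change LinearMap.dualMap (Matrix.toLin' (Matrix.diagonal fun i : Fin (ℓ + 1) => q ^ ((ℓ : ℤ) - 2 * ((i : ℕ) : ℤ))) *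
      Matrix.toLin' (Matrix.of fun i j : Fin (ℓ + 1) => if (i : ℕ) = (j : ℕ) + 1 then a * q * qnum q i else 0)) (dualG q ℓ (i + 1)) =
      (a * q⁻¹ * qnum q (ℓ - i)) • dualG q ℓ i
  rcases lt_or_ge i ℓ with hi | hi
  · refine LinearMap.ext fun v => ?_
    simp only [LinearMap.dualMap_apply, Module.End.mul_apply, LinearMap.smul_apply,
      smul_eq_mul, dualG_apply, evalModule,
      Matrix.toLin'_apply, Matrix.mulVec, dotProduct, Matrix.of_apply,
      Matrix.diagonal_apply, ite_mul, zero_mul, mul_ite, mul_zero,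
      Finset.sum_ite_eq, Finset.mem_univ, if_true,
      dif_pos (by omega : i < ℓ + 1), dif_pos (by omega : i + 1 < ℓ + 1),
      Nat.add_right_cancel_iff, sum_fin_ite' (by omega : i < ℓ + 1)]
    push_cast
    have h := rec1 hq hqru hi
    have hw : q ^ ((ℓ : ℤ) - 2 * ((i : ℤ) + 1)) * (q * q) = q ^ ((ℓ : ℤ) - 2 * i) := by
      rw [show q * q = q ^ (2 : ℤ) from (zpow_two q).symm, ← zpow_add₀ hq]
      congr 1; ring
    have hq1 : q * q⁻¹ = 1 := mul_inv_cancel₀ hq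
    set V := v ⟨i, by omega⟩
    linear_combination (a * q⁻¹ * V) * h +
      (a * q⁻¹ * cc q ℓ (i + 1) * qnum q (i + 1) * V) * hw +
      (-(a * q * cc q ℓ (i + 1) * qnum q (i + 1) * q ^ ((ℓ : ℤ) - 2 * ((i : ℤ) + 1)) * V)) * hq1
  · rw [dualG_of_ge q (by omega), show ℓ - i = 0 from by omega, qnum_zero]
    simp

set_option maxHeartbeats 1000000 in
set_option linter.unusedSectionVars false in
set_option linter.unusedTactic false in
lemma act_A0m_zero :
    LinearMap.dualMap ((evalModule q ℓ a).k1 * (evalModule q ℓ a).e0p) (dualG q ℓ 0) = 0 := by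
  change LinearMap.dualMap (Matrix.toLin' (Matrix.diagonal fun i : Fin (ℓ + 1) => q ^ ((ℓ : ℤ) - 2 * ((i : ℕ) : ℤ))) *
      Matrix.toLin' (Matrix.of fun i j : Fin (ℓ + 1) => if (i : ℕ) = (j : ℕ) + 1 then a * q * qnum q i else 0)) (dualG q ℓ 0) =
      0
  refine LinearMap.ext fun v => ?_
  simp only [LinearMap.dualMap_apply, Module.End.mul_apply, dualG_apply, evalModule,
    Matrix.toLin'_apply, Matrix.mulVec, dotProduct, Matrix.of_apply,
    Matrix.diagonal_apply, ite_mul, zero_mul, mul_ite, mul_zero,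
    Finset.sum_ite_eq, Finset.mem_univ, if_true, dif_pos (by omega : 0 < ℓ + 1)]
  simp

end Actions

/-! ### The standard basis side -/

/-- the standard basis vector (or 0 out of range) -/
noncomputable def std (ℓ i : ℕ) : Fin (ℓ + 1) → ℂ :=
  if h : i < ℓ + 1 then Pi.single (⟨i, h⟩ : Fin (ℓ + 1)) 1 else 0

lemma toLin'_single {n : ℕ} (M : Matrix (Fin n) (Fin n) ℂ) (j : Fin n) :
    Matrix.toLin' M (Pi.single j 1) = fun k => M k j := by
  funext k
  simp [Matrix.toLin'_apply, Matrix.mulVec_single]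

section Cols

variable (ℓ : ℕ) (b : ℂ)

lemma col_e0p (i : ℕ) :
    (evalModule q ℓ b).e0p (std ℓ i) = (b * q * qnum q (i + 1)) • std ℓ (i + 1) := by
  unfold std
  by_cases hi : i < ℓ + 1
  · rw [dif_pos hi]
    have h1 : (evalModule q ℓ b).e0p (Pi.single (⟨i, hi⟩ : Fin (ℓ + 1)) 1) =
        fun k : Fin (ℓ + 1) => (if (k : ℕ) = i + 1 then b * q * qnum q (k : ℕ) else 0) := by
      show Matrix.toLin' _ _ = _
      rw [toLin'_single]
      rfl
    rw [h1]
    by_cases hi1 : i + 1 < ℓ + 1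
    · rw [dif_pos hi1]
      funext k
      rcases eq_or_ne k (⟨i + 1, hi1⟩ : Fin (ℓ + 1)) with rfl | hk
      · simp [Pi.single_apply]
      · have hkv : ¬((k : ℕ) = i + 1) := fun h => hk (Fin.ext h)
        simp [Pi.single_apply, hkv, hk]
    · rw [dif_neg hi1]
      funext k
      rw [if_neg (by have := k.isLt; omega)]
      simp
  · rw [dif_neg hi, dif_neg (by omega)]
    simp
    exact map_zero _

lemma col_e1m (i : ℕ) :
    (evalModule q ℓ b).e1m (std ℓ i) = qnum q (i + 1) • std ℓ (i + 1) := by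
  unfold std
  by_cases hi : i < ℓ + 1
  · rw [dif_pos hi]
    have h1 : (evalModule q ℓ b).e1m (Pi.single (⟨i, hi⟩ : Fin (ℓ + 1)) 1) =
        fun k : Fin (ℓ + 1) => (if (k : ℕ) = i + 1 then qnum q (k : ℕ) else 0) := by
      show Matrix.toLin' _ _ = _
      rw [toLin'_single]
      rfl
    rw [h1]
    by_cases hi1 : i + 1 < ℓ + 1
    · rw [dif_pos hi1]
      funext k
      rcases eq_or_ne k (⟨i + 1, hi1⟩ : Fin (ℓ + 1)) with rfl | hk
      · simp [Pi.single_apply]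
      · have hkv : ¬((k : ℕ) = i + 1) := fun h => hk (Fin.ext h)
        simp [Pi.single_apply, hkv, hk]
    · rw [dif_neg hi1]
      funext k
      rw [if_neg (by have := k.isLt; omega)]
      simp
  · rw [dif_neg hi, dif_neg (by omega)]
    simp
    exact map_zero _

lemma col_e0m (i : ℕ) :
    (evalModule q ℓ b).e0m (std ℓ (i + 1)) = (b⁻¹ * q⁻¹ * qnum q (ℓ - i)) • std ℓ i := by
  unfold std
  by_cases hi1 : i + 1 < ℓ + 1
  · rw [dif_pos hi1, dif_pos (by omega : i < ℓ + 1)]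
    have h1 : (evalModule q ℓ b).e0m (Pi.single (⟨i + 1, hi1⟩ : Fin (ℓ + 1)) 1) =
        fun k : Fin (ℓ + 1) =>
          (if i + 1 = (k : ℕ) + 1 then b⁻¹ * q⁻¹ * qnum q (ℓ - (k : ℕ)) else 0) := by
      show Matrix.toLin' _ _ = _
      rw [toLin'_single]
      rfl
    rw [h1]
    funext k
    rcases eq_or_ne k (⟨i, by omega⟩ : Fin (ℓ + 1)) with rfl | hk
    · simp [Pi.single_apply]
    · have hkv : ¬(i + 1 = (k : ℕ) + 1) := by
        simp only [ne_eq, Fin.ext_iff] at hk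
        omega
      simp [Pi.single_apply, hkv, hk]
      intro h
      omega
  · rw [dif_neg hi1]
    by_cases hi : i < ℓ + 1
    · rw [dif_pos hi, show ℓ - i = 0 from by omega, qnum_zero]
      simp
      exact map_zero _
    · rw [dif_neg hi]
      simp
      exact map_zero _

lemma col_e0m_zero :
    (evalModule q ℓ b).e0m (std ℓ 0) = 0 := by
  unfold std
  rw [dif_pos (by omega : 0 < ℓ + 1)]
  have h1 : (evalModule q ℓ b).e0m (Pi.single (⟨0, by omega⟩ : Fin (ℓ + 1)) 1) =
      fun k : Fin (ℓ + 1) =>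
        (if (0 : ℕ) = (k : ℕ) + 1 then b⁻¹ * q⁻¹ * qnum q (ℓ - (k : ℕ)) else 0) := by
    show Matrix.toLin' _ _ = _
    rw [toLin'_single]
    rfl
  rw [h1]
  funext k
  rw [if_neg (by omega)]
  rfl

lemma col_e1p (i : ℕ) :
    (evalModule q ℓ b).e1p (std ℓ (i + 1)) = qnum q (ℓ - i) • std ℓ i := by
  unfold std
  by_cases hi1 : i + 1 < ℓ + 1
  · rw [dif_pos hi1, dif_pos (by omega : i < ℓ + 1)]
    have h1 : (evalModule q ℓ b).e1p (Pi.single (⟨i + 1, hi1⟩ : Fin (ℓ + 1)) 1) =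
        fun k : Fin (ℓ + 1) =>
          (if i + 1 = (k : ℕ) + 1 then qnum q (ℓ - (k : ℕ)) else 0) := by
      show Matrix.toLin' _ _ = _
      rw [toLin'_single]
      rfl
    rw [h1]
    funext k
    rcases eq_or_ne k (⟨i, by omega⟩ : Fin (ℓ + 1)) with rfl | hk
    · simp [Pi.single_apply]
    · have hkv : ¬(i + 1 = (k : ℕ) + 1) := by
        simp only [ne_eq, Fin.ext_iff] at hk
        omega
      simp [Pi.single_apply, hkv, hk]
      intro h
      omega
  · rw [dif_neg hi1]
    by_cases hi : i < ℓ + 1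
    · rw [dif_pos hi, show ℓ - i = 0 from by omega, qnum_zero]
      simp
      exact map_zero _
    · rw [dif_neg hi]
      simp
      exact map_zero _

lemma col_e1p_zero :
    (evalModule q ℓ b).e1p (std ℓ 0) = 0 := by
  unfold std
  rw [dif_pos (by omega : 0 < ℓ + 1)]
  have h1 : (evalModule q ℓ b).e1p (Pi.single (⟨0, by omega⟩ : Fin (ℓ + 1)) 1) =
      fun k : Fin (ℓ + 1) =>
        (if (0 : ℕ) = (k : ℕ) + 1 then qnum q (ℓ - (k : ℕ)) else 0) := by
    show Matrix.toLin' _ _ = _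
    rw [toLin'_single]
    rfl
  rw [h1]
  funext k
  rw [if_neg (by omega)]
  rfl

lemma col_k0 (i : ℕ) :
    (evalModule q ℓ b).k0 (std ℓ i) = (q ^ (2 * (i : ℤ) - (ℓ : ℤ))) • std ℓ i := by
  unfold std
  by_cases hi : i < ℓ + 1
  · rw [dif_pos hi]
    have h1 : (evalModule q ℓ b).k0 (Pi.single (⟨i, hi⟩ : Fin (ℓ + 1)) 1) =
        fun k : Fin (ℓ + 1) =>
          Matrix.diagonal (fun i : Fin (ℓ + 1) => q ^ (2 * ((i : ℕ) : ℤ) - (ℓ : ℤ)))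
            k ⟨i, hi⟩ := by
      show Matrix.toLin' _ _ = _
      rw [toLin'_single]
    rw [h1]
    funext k
    rcases eq_or_ne k (⟨i, hi⟩ : Fin (ℓ + 1)) with rfl | hk
    · simp [Matrix.diagonal_apply_eq, Pi.single_apply]
    · simp [Matrix.diagonal_apply_ne _ hk, Pi.single_apply, hk]
  · rw [dif_neg hi]
    simp
    exact map_zero _

lemma col_k1 (i : ℕ) :
    (evalModule q ℓ b).k1 (std ℓ i) = (q ^ ((ℓ : ℤ) - 2 * (i : ℤ))) • std ℓ i := by
  unfold std
  by_cases hi : i < ℓ + 1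
  · rw [dif_pos hi]
    have h1 : (evalModule q ℓ b).k1 (Pi.single (⟨i, hi⟩ : Fin (ℓ + 1)) 1) =
        fun k : Fin (ℓ + 1) =>
          Matrix.diagonal (fun i : Fin (ℓ + 1) => q ^ ((ℓ : ℤ) - 2 * ((i : ℕ) : ℤ)))
            k ⟨i, hi⟩ := by
      show Matrix.toLin' _ _ = _
      rw [toLin'_single]
    rw [h1]
    funext k
    rcases eq_or_ne k (⟨i, hi⟩ : Fin (ℓ + 1)) with rfl | hk
    · simp [Matrix.diagonal_apply_eq, Pi.single_apply]
    · simp [Matrix.diagonal_apply_ne _ hk, Pi.single_apply, hk]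
  · rw [dif_neg hi]
    simp
    exact map_zero _

end Cols


/-! ### The isomorphism -/

/-- forward map of the isomorphism -/
noncomputable def psiF (q : ℂ) (ℓ : ℕ) :
    Module.Dual ℂ (Fin (ℓ + 1) → ℂ) →ₗ[ℂ] (Fin (ℓ + 1) → ℂ) where
  toFun f := fun j => (cc q ℓ (j : ℕ))⁻¹ * f (Pi.single j 1)
  map_add' f g := by funext j; simp [mul_add]
  map_smul' c f := by funext j; simp [smul_eq_mul]; ring

/-- backward map of the isomorphism -/
noncomputable def psiG (q : ℂ) (ℓ : ℕ) :
    (Fin (ℓ + 1) → ℂ) →ₗ[ℂ] Module.Dual ℂ (Fin (ℓ + 1) → ℂ) where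
  toFun w := ∑ j : Fin (ℓ + 1),
    (cc q ℓ (j : ℕ) * w j) • (LinearMap.proj j : (Fin (ℓ + 1) → ℂ) →ₗ[ℂ] ℂ)
  map_add' w w' := by
    simp only [Pi.add_apply, mul_add, add_smul, Finset.sum_add_distrib]
  map_smul' c w := by
    simp only [Pi.smul_apply, smul_eq_mul, RingHom.id_apply, Finset.smul_sum, smul_smul,
      mul_left_comm]

lemma dual_eq_sum (ℓ : ℕ) (f : Module.Dual ℂ (Fin (ℓ + 1) → ℂ)) (v : Fin (ℓ + 1) → ℂ) :
    f v = ∑ j : Fin (ℓ + 1), v j * f (Pi.single j 1) := by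
  conv_lhs => rw [← Finset.univ_sum_single v]
  rw [map_sum]
  congr 1; funext j
  have hs : Pi.single j (v j) = v j • (Pi.single j (1 : ℂ) : Fin (ℓ + 1) → ℂ) := by
    rw [← Pi.single_smul' j (v j) (1 : ℂ), smul_eq_mul, mul_one]
  rw [hs, map_smul, smul_eq_mul]

/-- the isomorphism from the dual module to `V(ℓ, a⁻¹)` -/
noncomputable def psi {q : ℂ} (hq : q ≠ 0) (hqru : NotRootOfUnity q) (ℓ : ℕ) :
    Module.Dual ℂ (Fin (ℓ + 1) → ℂ) ≃ₗ[ℂ] (Fin (ℓ + 1) → ℂ) :=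
  LinearEquiv.ofLinear (psiF q ℓ) (psiG q ℓ)
    (by
      apply LinearMap.ext; intro w
      funext j
      simp only [LinearMap.comp_apply, psiF, psiG, LinearMap.coe_mk, AddHom.coe_mk,
        LinearMap.id_apply, LinearMap.sum_apply, LinearMap.smul_apply, LinearMap.proj_apply,
        smul_eq_mul, Pi.single_apply, mul_ite, mul_one, mul_zero,
        Finset.sum_ite_eq', Finset.mem_univ, if_true]
      exact inv_mul_cancel_left₀ (cc_ne_zero hq hqru ℓ (j : ℕ)) (w j))
    (by
      apply LinearMap.ext; intro f
      apply LinearMap.ext; intro v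
      simp only [LinearMap.comp_apply, psiF, psiG, LinearMap.coe_mk, AddHom.coe_mk,
        LinearMap.id_apply, LinearMap.sum_apply, LinearMap.smul_apply, LinearMap.proj_apply,
        smul_eq_mul]
      rw [dual_eq_sum ℓ f v]
      congr 1; funext j
      rw [mul_inv_cancel_left₀ (cc_ne_zero hq hqru ℓ (j : ℕ))]
      ring)

lemma psi_dualG {q : ℂ} (hq : q ≠ 0) (hqru : NotRootOfUnity q) (ℓ i : ℕ) :
    psi hq hqru ℓ (dualG q ℓ i) = std ℓ i := by
  by_cases hi : i < ℓ + 1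
  · funext j
    show (psiF q ℓ) (dualG q ℓ i) j = std ℓ i j
    unfold std
    rw [dif_pos hi]
    show (cc q ℓ (j : ℕ))⁻¹ * dualG q ℓ i (Pi.single j 1) = _
    rw [dualG_apply, dif_pos hi, Pi.single_apply, Pi.single_apply]
    rcases eq_or_ne j (⟨i, hi⟩ : Fin (ℓ + 1)) with rfl | hj
    · rw [if_pos rfl, mul_one]
      exact inv_mul_cancel₀ (cc_ne_zero hq hqru ℓ i)
    · rw [if_neg (Ne.symm hj), if_neg hj]
      simp
  · rw [dualG_of_ge q (by omega)]
    unfold std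
    rw [dif_neg hi]
    exact map_zero (psi hq hqru ℓ)

lemma bg_eq {q : ℂ} (hq : q ≠ 0) (hqru : NotRootOfUnity q) (ℓ : ℕ) (j : Fin (ℓ + 1)) :
    Module.Basis.ofEquivFun (psi hq hqru ℓ) j = dualG q ℓ (j : ℕ) := by
  apply (psi hq hqru ℓ).injective
  rw [psi_dualG hq hqru ℓ (j : ℕ)]
  rw [show (Module.Basis.ofEquivFun (psi hq hqru ℓ)) j = (psi hq hqru ℓ).symm (Pi.single j 1) from
    congrFun (Module.Basis.coe_ofEquivFun _) j]
  rw [LinearEquiv.apply_symm_apply]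
  unfold std
  rw [dif_pos j.isLt]

section Inter

variable (hq : q ≠ 0) (hqru : NotRootOfUnity q) (ℓ : ℕ) (a : ℂ)

lemma inter_e0p :
    (evalModule q ℓ a⁻¹).e0p ∘ₗ (psi hq hqru ℓ).toLinearMap
      = (psi hq hqru ℓ).toLinearMap ∘ₗ
        LinearMap.dualMap ((evalModule q ℓ a).e0m * (evalModule q ℓ a).k0) := by
  apply Module.Basis.ext (Module.Basis.ofEquivFun (psi hq hqru ℓ))
  intro j
  rw [bg_eq hq hqru ℓ j]
  show (evalModule q ℓ a⁻¹).e0p (psi hq hqru ℓ (dualG q ℓ (j : ℕ)))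
    = psi hq hqru ℓ (LinearMap.dualMap ((evalModule q ℓ a).e0m * (evalModule q ℓ a).k0)
        (dualG q ℓ (j : ℕ)))
  rw [psi_dualG, act_A0p hq hqru ℓ a (j : ℕ), map_smul, psi_dualG,
    col_e0p ℓ a⁻¹ (j : ℕ)]

lemma inter_e0m :
    (evalModule q ℓ a⁻¹).e0m ∘ₗ (psi hq hqru ℓ).toLinearMap
      = (psi hq hqru ℓ).toLinearMap ∘ₗ
        LinearMap.dualMap ((evalModule q ℓ a).k1 * (evalModule q ℓ a).e0p) := by
  apply Module.Basis.ext (Module.Basis.ofEquivFun (psi hq hqru ℓ))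
  intro j
  rw [bg_eq hq hqru ℓ j]
  show (evalModule q ℓ a⁻¹).e0m (psi hq hqru ℓ (dualG q ℓ (j : ℕ)))
    = psi hq hqru ℓ (LinearMap.dualMap ((evalModule q ℓ a).k1 * (evalModule q ℓ a).e0p)
        (dualG q ℓ (j : ℕ)))
  rw [psi_dualG]
  cases hn : (j : ℕ) with
  | zero =>
      rw [act_A0m_zero hq hqru ℓ a]
      exact (col_e0m_zero ℓ a⁻¹).trans (map_zero _).symm
  | succ i =>
      rw [act_A0m hq hqru ℓ a i, map_smul, psi_dualG, col_e0m ℓ a⁻¹ i, inv_inv]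

lemma inter_e1p :
    (evalModule q ℓ a⁻¹).e1p ∘ₗ (psi hq hqru ℓ).toLinearMap
      = (psi hq hqru ℓ).toLinearMap ∘ₗ
        LinearMap.dualMap ((evalModule q ℓ a).e1m * (evalModule q ℓ a).k1) := by
  apply Module.Basis.ext (Module.Basis.ofEquivFun (psi hq hqru ℓ))
  intro j
  rw [bg_eq hq hqru ℓ j]
  show (evalModule q ℓ a⁻¹).e1p (psi hq hqru ℓ (dualG q ℓ (j : ℕ)))
    = psi hq hqru ℓ (LinearMap.dualMap ((evalModule q ℓ a).e1m * (evalModule q ℓ a).k1)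
        (dualG q ℓ (j : ℕ)))
  rw [psi_dualG]
  cases hn : (j : ℕ) with
  | zero =>
      rw [act_A1p_zero hq hqru ℓ a]
      exact (col_e1p_zero ℓ a⁻¹).trans (map_zero _).symm
  | succ i =>
      rw [act_A1p hq hqru ℓ a i, map_smul, psi_dualG, col_e1p ℓ a⁻¹ i]

lemma inter_e1m :
    (evalModule q ℓ a⁻¹).e1m ∘ₗ (psi hq hqru ℓ).toLinearMap
      = (psi hq hqru ℓ).toLinearMap ∘ₗ
        LinearMap.dualMap ((evalModule q ℓ a).k0 * (evalModule q ℓ a).e1p) := by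
  apply Module.Basis.ext (Module.Basis.ofEquivFun (psi hq hqru ℓ))
  intro j
  rw [bg_eq hq hqru ℓ j]
  show (evalModule q ℓ a⁻¹).e1m (psi hq hqru ℓ (dualG q ℓ (j : ℕ)))
    = psi hq hqru ℓ (LinearMap.dualMap ((evalModule q ℓ a).k0 * (evalModule q ℓ a).e1p)
        (dualG q ℓ (j : ℕ)))
  rw [psi_dualG, act_A1m hq hqru ℓ a (j : ℕ), map_smul, psi_dualG,
    col_e1m ℓ a⁻¹ (j : ℕ)]

lemma inter_k0 :
    (evalModule q ℓ a⁻¹).k0 ∘ₗ (psi hq hqru ℓ).toLinearMap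
      = (psi hq hqru ℓ).toLinearMap ∘ₗ
        LinearMap.dualMap ((evalModule q ℓ a).k0) := by
  apply Module.Basis.ext (Module.Basis.ofEquivFun (psi hq hqru ℓ))
  intro j
  rw [bg_eq hq hqru ℓ j]
  show (evalModule q ℓ a⁻¹).k0 (psi hq hqru ℓ (dualG q ℓ (j : ℕ)))
    = psi hq hqru ℓ (LinearMap.dualMap ((evalModule q ℓ a).k0) (dualG q ℓ (j : ℕ)))
  rw [psi_dualG, act_AK0 hq hqru ℓ a (j : ℕ), map_smul, psi_dualG,
    col_k0 ℓ a⁻¹ (j : ℕ)]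

lemma inter_k1 :
    (evalModule q ℓ a⁻¹).k1 ∘ₗ (psi hq hqru ℓ).toLinearMap
      = (psi hq hqru ℓ).toLinearMap ∘ₗ
        LinearMap.dualMap ((evalModule q ℓ a).k1) := by
  apply Module.Basis.ext (Module.Basis.ofEquivFun (psi hq hqru ℓ))
  intro j
  rw [bg_eq hq hqru ℓ j]
  show (evalModule q ℓ a⁻¹).k1 (psi hq hqru ℓ (dualG q ℓ (j : ℕ)))
    = psi hq hqru ℓ (LinearMap.dualMap ((evalModule q ℓ a).k1) (dualG q ℓ (j : ℕ)))
  rw [psi_dualG, act_AK1 hq hqru ℓ a (j : ℕ), map_smul, psi_dualG,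
    col_k1 ℓ a⁻¹ (j : ℕ)]

end Inter

end DualEvalAux

/-- the dual of the evaluation module `V(ℓ,a)`, with `L`-action twisted by
the antiautomorphism `τ` (so that `e_i⁺` acts by the transpose of `e_i⁻k_i`, `e_i⁻` by
the transpose of `k_i⁻¹e_i⁺`, `k_i^{±1}` by its own transpose), is isomorphic to
`V(ℓ,a⁻¹)`; explicitly the `g_i` form a standard basis with parameter `a⁻¹`. -/
theorem dual_eval_module (q : ℂ) (hq : q ≠ 0) (hqru : NotRootOfUnity q)
    (ℓ : ℕ) (hℓ : 1 ≤ ℓ) (a : ℂ) (ha : a ≠ 0)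
    (A0p A0m A1p A1m AK0 AK1 : Module.End ℂ (Module.Dual ℂ ((evalModule q ℓ a).V)))
    (hA0p : A0p = LinearMap.dualMap ((evalModule q ℓ a).e0m * (evalModule q ℓ a).k0))
    (hA0m : A0m = LinearMap.dualMap ((evalModule q ℓ a).k1 * (evalModule q ℓ a).e0p))
    (hA1p : A1p = LinearMap.dualMap ((evalModule q ℓ a).e1m * (evalModule q ℓ a).k1))
    (hA1m : A1m = LinearMap.dualMap ((evalModule q ℓ a).k0 * (evalModule q ℓ a).e1p))
    (hAK0 : AK0 = LinearMap.dualMap ((evalModule q ℓ a).k0))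
    (hAK1 : AK1 = LinearMap.dualMap ((evalModule q ℓ a).k1)) :
    (∃ ψ : Module.Dual ℂ ((evalModule q ℓ a).V) ≃ₗ[ℂ] (evalModule q ℓ a⁻¹).V,
      (evalModule q ℓ a⁻¹).e0p ∘ₗ ψ.toLinearMap = ψ.toLinearMap ∘ₗ A0p ∧
      (evalModule q ℓ a⁻¹).e0m ∘ₗ ψ.toLinearMap = ψ.toLinearMap ∘ₗ A0m ∧
      (evalModule q ℓ a⁻¹).e1p ∘ₗ ψ.toLinearMap = ψ.toLinearMap ∘ₗ A1p ∧
      (evalModule q ℓ a⁻¹).e1m ∘ₗ ψ.toLinearMap = ψ.toLinearMap ∘ₗ A1m ∧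
      (evalModule q ℓ a⁻¹).k0 ∘ₗ ψ.toLinearMap = ψ.toLinearMap ∘ₗ AK0 ∧
      (evalModule q ℓ a⁻¹).k1 ∘ₗ ψ.toLinearMap = ψ.toLinearMap ∘ₗ AK1) ∧
    (∀ i : ℕ, A0p (dualG q ℓ i) = (a⁻¹ * q * qnum q (i + 1)) • dualG q ℓ (i + 1)) ∧
    (∀ i : ℕ, A0m (dualG q ℓ (i + 1)) = (a * q⁻¹ * qnum q (ℓ - i)) • dualG q ℓ i) ∧
    A0m (dualG q ℓ 0) = 0 ∧
    (∀ i : ℕ, A1p (dualG q ℓ (i + 1)) = qnum q (ℓ - i) • dualG q ℓ i) ∧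
    A1p (dualG q ℓ 0) = 0 ∧
    (∀ i : ℕ, A1m (dualG q ℓ i) = qnum q (i + 1) • dualG q ℓ (i + 1)) ∧
    (∀ i : ℕ, AK0 (dualG q ℓ i) = q ^ (2 * (i : ℤ) - (ℓ : ℤ)) • dualG q ℓ i) ∧
    (∀ i : ℕ, AK1 (dualG q ℓ i) = q ^ ((ℓ : ℤ) - 2 * (i : ℤ)) • dualG q ℓ i) := by
  subst hA0p hA0m hA1p hA1m hAK0 hAK1
  exact ⟨⟨DualEvalAux.psi hq hqru ℓ,
    DualEvalAux.inter_e0p hq hqru ℓ a, DualEvalAux.inter_e0m hq hqru ℓ a,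
    DualEvalAux.inter_e1p hq hqru ℓ a, DualEvalAux.inter_e1m hq hqru ℓ a,
    DualEvalAux.inter_k0 hq hqru ℓ a, DualEvalAux.inter_k1 hq hqru ℓ a⟩,
    DualEvalAux.act_A0p hq hqru ℓ a, DualEvalAux.act_A0m hq hqru ℓ a,
    DualEvalAux.act_A0m_zero hq hqru ℓ a, DualEvalAux.act_A1p hq hqru ℓ a,
    DualEvalAux.act_A1p_zero hq hqru ℓ a, DualEvalAux.act_A1m hq hqru ℓ a,
    DualEvalAux.act_AK0 hq hqru ℓ a, DualEvalAux.act_AK1 hq hqru ℓ a⟩
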